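/- For each odd n ≥ 1, write δ = (n−1)/2. In RLT_n, the number of ordered pairs (γ₁, γ₂) of 4-cycles through vertex 0 with V(γ₁)∩V(γ₂) = {0} equals (δ−2)(δ−1)δ(δ+1)(2δ−5)(8δ−3)/36. -/

import Mathlib

/-- The dominance relation of the regular locally transitive tournament `RLT_n`
on `ZMod n` (for odd `n`). -/
def rltAdj (n : ℕ) (i j : ZMod n) : Prop :=
  (j - i).val ∈ Finset.Icc 1 ((n - 1) / 2)

/-- An `m`-cycle through the vertex `0`, recorded as the injective cyclic sequence of
its vertices based at `0` (so each such cycle is recorded exactly once). -/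
def IsBasedCycleAtZero (n m : ℕ) [NeZero m] (v : Fin m → ZMod n) : Prop :=
  v 0 = 0 ∧ Function.Injective v ∧ ∀ k, rltAdj n (v k) (v (k + 1))

open Finset

namespace RLTaux

def Cset (δ : ℕ) : Finset (ℕ × ℕ × ℕ) :=
  ((Icc 1 (2*δ)) ×ˢ (Icc 1 (2*δ)) ×ˢ (Icc 1 (2*δ))).filter
    (fun t => t.1 < t.2.1 ∧ t.2.1 < t.2.2 ∧ t.1 ≤ δ ∧ t.2.1 ≤ t.1 + δ ∧
      t.2.2 ≤ t.2.1 + δ ∧ δ + 1 ≤ t.2.2)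

lemma mem_Cset {δ : ℕ} {t : ℕ × ℕ × ℕ} :
    t ∈ Cset δ ↔ 1 ≤ t.1 ∧ t.1 < t.2.1 ∧ t.2.1 < t.2.2 ∧ t.2.2 ≤ 2*δ ∧ t.1 ≤ δ ∧
      t.2.1 ≤ t.1 + δ ∧ t.2.2 ≤ t.2.1 + δ ∧ δ + 1 ≤ t.2.2 := by
  simp only [Cset, mem_filter, mem_product, mem_Icc]
  constructor
  · rintro ⟨⟨h1, h2, h3⟩, h4⟩; omega
  · intro h; omega

def P2 (u v : ℕ) (t : ℕ × ℕ × ℕ) : Prop :=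
  (u = t.1 ∨ u = t.2.1 ∨ u = t.2.2) ∧ (v = t.1 ∨ v = t.2.1 ∨ v = t.2.2)

instance (u v : ℕ) : DecidablePred (P2 u v) := fun t => by unfold P2; infer_instance

def cnt2 (δ u v : ℕ) : ℕ := ((Cset δ).filter (P2 u v)).card

-- region 1 : u < v ≤ δ  : value v
lemma cnt2_R1 {δ u v : ℕ} (h1 : 1 ≤ u) (h2 : u < v) (h3 : v ≤ δ) :
    cnt2 δ u v = v := by
  have : cnt2 δ u v = (Ioc δ (v + δ)).card := by
    apply Finset.card_nbij' (fun t => t.2.2) (fun c => (u, v, c))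
    · rintro ⟨a, b, c⟩ ht
      simp only [mem_coe, mem_filter, mem_Cset, P2] at ht
      simp only [mem_coe, mem_Ioc]
      omega
    · intro c hc
      simp only [mem_coe, mem_Ioc] at hc
      simp only [mem_coe, mem_filter, mem_Cset, P2, eq_self_iff_true, true_or, or_true, and_true, true_and]
      omega
    · rintro ⟨a, b, c⟩ ht
      simp only [mem_coe, mem_filter, mem_Cset, P2] at ht
      simp only [Prod.mk.injEq, eq_self_iff_true, and_true, true_and, and_self]
      omega
    · intro c _; rfl
  rw [this, Nat.card_Ioc]; omega

-- region 2 : δ + 1 ≤ u < v : value 2δ+1-u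
lemma cnt2_R2 {δ u v : ℕ} (h1 : δ + 1 ≤ u) (h2 : u < v) (h3 : v ≤ 2*δ) :
    cnt2 δ u v = 2*δ + 1 - u := by
  have : cnt2 δ u v = (Ioc (u - δ - 1) δ).card := by
    apply Finset.card_nbij' (fun t => t.1) (fun a => (a, u, v))
    · rintro ⟨a, b, c⟩ ht
      simp only [mem_coe, mem_filter, mem_Cset, P2] at ht
      simp only [mem_coe, mem_Ioc]
      omega
    · intro a ha
      simp only [mem_coe, mem_Ioc] at ha
      simp only [mem_coe, mem_filter, mem_Cset, P2, eq_self_iff_true, true_or, or_true, and_true, true_and]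
      omega
    · rintro ⟨a, b, c⟩ ht
      simp only [mem_coe, mem_filter, mem_Cset, P2] at ht
      simp only [Prod.mk.injEq, eq_self_iff_true, and_true, true_and, and_self]
      omega
    · intro a _; rfl
  rw [this, Nat.card_Ioc]; omega

-- region 4 : u ≤ δ < v, u + δ < v : value u + 2δ + 1 - v
lemma cnt2_R4 {δ u v : ℕ} (h1 : 1 ≤ u) (h2 : u ≤ δ) (h3 : u + δ < v) (h4 : v ≤ 2*δ) :
    cnt2 δ u v = u + 2*δ + 1 - v := by
  have : cnt2 δ u v = (Ioc (v - δ - 1) (u + δ)).card := by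
    apply Finset.card_nbij' (fun t => t.2.1) (fun b => (u, b, v))
    · rintro ⟨a, b, c⟩ ht
      simp only [mem_coe, mem_filter, mem_Cset, P2] at ht
      simp only [mem_coe, mem_Ioc]
      omega
    · intro b hb
      simp only [mem_coe, mem_Ioc] at hb
      simp only [mem_coe, mem_filter, mem_Cset, P2, eq_self_iff_true, true_or, or_true, and_true, true_and]
      omega
    · rintro ⟨a, b, c⟩ ht
      simp only [mem_coe, mem_filter, mem_Cset, P2] at ht
      simp only [Prod.mk.injEq, eq_self_iff_true, and_true, true_and, and_self]
      omega
    · intro b _; rfl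
  rw [this, Nat.card_Ioc]; omega

-- region 3 : u ≤ δ < v ≤ u + δ : value 2δ - 2
lemma cnt2_R3 {δ u v : ℕ} (h1 : 1 ≤ u) (h2 : u ≤ δ) (h3 : δ < v) (h4 : v ≤ u + δ)
    (h5 : v ≤ 2*δ) :
    cnt2 δ u v = 2*δ - 2 := by
  have hsplit : (Cset δ).filter (P2 u v) =
      ((Cset δ).filter (fun t => t.1 = u ∧ t.2.1 = v)) ∪
      (((Cset δ).filter (fun t => t.2.1 = u ∧ t.2.2 = v)) ∪
       ((Cset δ).filter (fun t => t.1 = u ∧ t.2.2 = v ∧ t.2.1 ≠ v))) := by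
    rw [← Finset.filter_or, ← Finset.filter_or]
    apply Finset.filter_congr
    rintro ⟨a, b, c⟩ ht
    simp only [mem_Cset] at ht
    simp only [P2]
    constructor
    · intro h; omega
    · intro h; omega
  have d1 : Disjoint ((Cset δ).filter (fun t => t.1 = u ∧ t.2.1 = v))
      (((Cset δ).filter (fun t => t.2.1 = u ∧ t.2.2 = v)) ∪
       ((Cset δ).filter (fun t => t.1 = u ∧ t.2.2 = v ∧ t.2.1 ≠ v))) := by
    rw [Finset.disjoint_left]
    rintro ⟨a, b, c⟩ hx hy
    simp only [mem_coe, mem_filter, mem_Cset, mem_union] at hx hy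
    omega
  have d2 : Disjoint ((Cset δ).filter (fun t => t.2.1 = u ∧ t.2.2 = v))
      ((Cset δ).filter (fun t => t.1 = u ∧ t.2.2 = v ∧ t.2.1 ≠ v)) := by
    rw [Finset.disjoint_left]
    rintro ⟨a, b, c⟩ hx hy
    simp only [mem_coe, mem_filter, mem_Cset] at hx hy
    omega
  have c1 : ((Cset δ).filter (fun t => t.1 = u ∧ t.2.1 = v)).card = 2*δ - v := by
    have : ((Cset δ).filter (fun t => t.1 = u ∧ t.2.1 = v)).card = (Ioc v (2*δ)).card := by
      apply Finset.card_nbij' (fun t => t.2.2) (fun c => (u, v, c))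
      · rintro ⟨a, b, c⟩ ht
        simp only [mem_coe, mem_filter, mem_Cset] at ht
        simp only [mem_coe, mem_Ioc]
        omega
      · intro c hc
        simp only [mem_coe, mem_Ioc] at hc
        simp only [mem_coe, mem_filter, mem_Cset, eq_self_iff_true, and_true, true_and]
        omega
      · rintro ⟨a, b, c⟩ ht
        simp only [mem_coe, mem_filter, mem_Cset] at ht
        simp only [Prod.mk.injEq, eq_self_iff_true, and_true, true_and, and_self]
        omega
      · intro c _; rfl
    rw [this, Nat.card_Ioc]; try omega
  have c2' : ((Cset δ).filter (fun t => t.2.1 = u ∧ t.2.2 = v)).card = u - 1 := by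
    have : ((Cset δ).filter (fun t => t.2.1 = u ∧ t.2.2 = v)).card = (Ioc 0 (u-1)).card := by
      apply Finset.card_nbij' (fun t => t.1) (fun a => (a, u, v))
      · rintro ⟨a, b, c⟩ ht
        simp only [mem_coe, mem_filter, mem_Cset] at ht
        simp only [mem_coe, mem_Ioc]
        omega
      · intro a ha
        simp only [mem_coe, mem_Ioc] at ha
        simp only [mem_coe, mem_filter, mem_Cset, eq_self_iff_true, and_true, true_and]
        omega
      · rintro ⟨a, b, c⟩ ht
        simp only [mem_coe, mem_filter, mem_Cset] at ht
        simp only [Prod.mk.injEq, eq_self_iff_true, and_true, true_and, and_self]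
        omega
      · intro a _; rfl
    rw [this, Nat.card_Ioc]; try omega
  have c3 : ((Cset δ).filter (fun t => t.1 = u ∧ t.2.2 = v ∧ t.2.1 ≠ v)).card = v - u - 1 := by
    have : ((Cset δ).filter (fun t => t.1 = u ∧ t.2.2 = v ∧ t.2.1 ≠ v)).card
        = (Ioc u (v-1)).card := by
      apply Finset.card_nbij' (fun t => t.2.1) (fun b => (u, b, v))
      · rintro ⟨a, b, c⟩ ht
        simp only [mem_coe, mem_filter, mem_Cset] at ht
        simp only [mem_coe, mem_Ioc]
        omega
      · intro b hb
        simp only [mem_coe, mem_Ioc] at hb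
        simp only [mem_coe, mem_filter, mem_Cset, eq_self_iff_true, and_true, true_and]
        omega
      · rintro ⟨a, b, c⟩ ht
        simp only [mem_coe, mem_filter, mem_Cset] at ht
        simp only [Prod.mk.injEq, eq_self_iff_true, and_true, true_and, and_self]
        omega
      · intro b _; rfl
    rw [this, Nat.card_Ioc]; try omega
  rw [cnt2, hsplit, Finset.card_union_of_disjoint d1, Finset.card_union_of_disjoint d2,
    c1, c2', c3]
  omega

/-- discrete antiderivative evaluation over Ioc -/
lemma sum_Ioc_eq (f F : ℕ → ℤ) (h : ∀ v, F (v+1) = F v + f (v+1)) :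
    ∀ {a b : ℕ}, a ≤ b → ∑ v ∈ Ioc a b, f v = F b - F a := by
  intro a b hab
  induction b, hab using Nat.le_induction with
  | base => simp
  | succ n hn ih =>
    rw [Finset.sum_Ioc_succ_top (by omega), ih, h n]
    ring

lemma Ioc_filter_lt (N u : ℕ) (hu : u ≤ N) :
    (Ioc 0 N).filter (fun v => u < v) = Ioc u N := by
  ext v; simp only [mem_filter, mem_Ioc]; omega

lemma Ioc_filter_gt (N u : ℕ) (hu : 1 ≤ u) (hu2 : u ≤ N) :
    (Ioc 0 N).filter (fun v => v < u) = Ioc 0 (u-1) := by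
  ext v; simp only [mem_filter, mem_Ioc]; omega

/-- membership indicator -/
def chi (v : ℕ) (t : ℕ × ℕ × ℕ) : ℤ :=
  if v = t.1 ∨ v = t.2.1 ∨ v = t.2.2 then 1 else 0

lemma chi_mul_self (v : ℕ) (t : ℕ × ℕ × ℕ) : chi v t * chi v t = chi v t := by
  unfold chi; split_ifs <;> ring

/-- number of cycles containing both u and v, as an integer -/
def c2 (δ u v : ℕ) : ℤ := ∑ t ∈ Cset δ, chi u t * chi v t

lemma c2_symm (δ u v : ℕ) : c2 δ u v = c2 δ v u :=
  Finset.sum_congr rfl fun t _ => mul_comm _ _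

lemma c2_eq_cnt2 (δ u v : ℕ) : c2 δ u v = (cnt2 δ u v : ℤ) := by
  unfold c2 chi cnt2
  rw [← Finset.sum_boole]
  exact Finset.sum_congr rfl fun t _ => by
    by_cases h1 : (u = t.1 ∨ u = t.2.1 ∨ u = t.2.2) <;>
    by_cases h2 : (v = t.1 ∨ v = t.2.1 ∨ v = t.2.2) <;> simp [h1, h2, P2]

/-- number of cycles through v -/
def g (δ v : ℕ) : ℤ := ∑ t ∈ Cset δ, chi v t

lemma c2_diag (δ v : ℕ) : c2 δ v v = g δ v :=
  Finset.sum_congr rfl fun t _ => chi_mul_self v t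

lemma rowsum {δ : ℕ} {t : ℕ × ℕ × ℕ} (ht : t ∈ Cset δ) :
    ∑ v ∈ Ioc 0 (2*δ), chi v t = 3 := by
  obtain ⟨a, b, c⟩ := t
  rw [mem_Cset] at ht
  simp only at ht
  unfold chi
  rw [Finset.sum_boole]
  have : (Ioc 0 (2*δ)).filter (fun v => v = (a,b,c).1 ∨ v = (a,b,c).2.1 ∨ v = (a,b,c).2.2)
      = {a, b, c} := by
    ext v
    simp only [mem_filter, mem_Ioc, mem_insert, mem_singleton]
    omega
  rw [this]
  rw [Finset.card_insert_of_notMem (by simp only [mem_insert, mem_singleton]; omega),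
    Finset.card_insert_of_notMem (by simp only [mem_singleton]; omega),
    Finset.card_singleton]
  norm_num

lemma colsum (δ u : ℕ) : ∑ v ∈ Ioc 0 (2*δ), c2 δ u v = 3 * g δ u := by
  unfold c2 g
  rw [Finset.sum_comm]
  rw [Finset.mul_sum]
  refine Finset.sum_congr rfl fun t ht => ?_
  rw [← Finset.mul_sum, rowsum ht]
  ring

/-- reversal symmetry of the cycle set -/
def rev (δ : ℕ) (t : ℕ × ℕ × ℕ) : ℕ × ℕ × ℕ :=
  (2*δ + 1 - t.2.2, 2*δ + 1 - t.2.1, 2*δ + 1 - t.1)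

lemma rev_mem {δ : ℕ} {t : ℕ × ℕ × ℕ} (ht : t ∈ Cset δ) : rev δ t ∈ Cset δ := by
  obtain ⟨a, b, c⟩ := t
  rw [mem_Cset] at ht ⊢
  simp only [rev] at ht ⊢
  omega

lemma rev_rev {δ : ℕ} {t : ℕ × ℕ × ℕ} (ht : t ∈ Cset δ) : rev δ (rev δ t) = t := by
  obtain ⟨a, b, c⟩ := t
  rw [mem_Cset] at ht
  simp only [rev, Prod.mk.injEq] at ht ⊢
  omega

lemma grev {δ v : ℕ} (h1 : 1 ≤ v) (h2 : v ≤ 2*δ) : g δ (2*δ + 1 - v) = g δ v := by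
  unfold g
  apply Finset.sum_nbij' (rev δ) (rev δ)
  · exact fun t ht => rev_mem ht
  · exact fun t ht => rev_mem ht
  · exact fun t ht => rev_rev ht
  · exact fun t ht => rev_rev ht
  · intro t ht
    obtain ⟨a, b, c⟩ := t
    rw [mem_Cset] at ht
    simp only at ht
    unfold chi rev
    simp only
    refine if_congr ?_ rfl rfl
    constructor <;> intro h <;> omega

lemma cnt2_cast_R1 {δ u v : ℕ} (h1 : 1 ≤ u) (h2 : u < v) (h3 : v ≤ δ) :
    c2 δ u v = (v : ℤ) := by
  have h := cnt2_R1 h1 h2 h3; rw [c2_eq_cnt2]; omega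

lemma cnt2_cast_R2 {δ u v : ℕ} (h1 : δ + 1 ≤ u) (h2 : u < v) (h3 : v ≤ 2*δ) :
    c2 δ u v = 2*(δ:ℤ) + 1 - u := by
  have h := cnt2_R2 h1 h2 h3; rw [c2_eq_cnt2]; omega

lemma cnt2_cast_R3 {δ u v : ℕ} (h1 : 1 ≤ u) (h2 : u ≤ δ) (h3 : δ < v) (h4 : v ≤ u + δ)
    (h5 : v ≤ 2*δ) : c2 δ u v = 2*(δ:ℤ) - 2 := by
  have h := cnt2_R3 h1 h2 h3 h4 h5; rw [c2_eq_cnt2]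
  have : (1:ℕ) ≤ δ := by omega
  omega

lemma cnt2_cast_R4 {δ u v : ℕ} (h1 : 1 ≤ u) (h2 : u ≤ δ) (h3 : u + δ < v) (h4 : v ≤ 2*δ) :
    c2 δ u v = (u:ℤ) + 2*δ + 1 - v := by
  have h := cnt2_R4 h1 h2 h3 h4; rw [c2_eq_cnt2]; omega

/-- closed form for g on the lower half -/
lemma two_g {δ v : ℕ} (h1 : 1 ≤ v) (h2 : v ≤ δ) :
    2 * g δ v = (δ:ℤ)*(δ+1) + 2*(v:ℤ)*((δ:ℤ)-2) := by
  have hcol := colsum δ v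
  have e0 : ∑ u ∈ Ioc 0 (2*δ), c2 δ v u
      = (∑ u ∈ Ioc 0 (v-1), c2 δ v u) + (∑ u ∈ Ioc (v-1) v, c2 δ v u)
        + (∑ u ∈ Ioc v δ, c2 δ v u) + (∑ u ∈ Ioc δ (v+δ), c2 δ v u)
        + (∑ u ∈ Ioc (v+δ) (2*δ), c2 δ v u) := by
    rw [Finset.sum_Ioc_consecutive _ (by omega : (0:ℕ) ≤ v-1) (by omega : v-1 ≤ v),
      Finset.sum_Ioc_consecutive _ (by omega : (0:ℕ) ≤ v) (by omega : v ≤ δ),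
      Finset.sum_Ioc_consecutive _ (by omega : (0:ℕ) ≤ δ) (by omega : δ ≤ v+δ),
      Finset.sum_Ioc_consecutive _ (by omega : (0:ℕ) ≤ v+δ) (by omega : v+δ ≤ 2*δ)]
  have eA : ∑ u ∈ Ioc 0 (v-1), c2 δ v u = ((v:ℤ) - 1) * v := by
    have hval : ∀ u ∈ Ioc 0 (v-1), c2 δ v u = (v:ℤ) := by
      intro u hu; simp only [mem_Ioc] at hu
      rw [c2_symm]; exact cnt2_cast_R1 (by omega) (by omega) h2
    rw [Finset.sum_congr rfl hval, Finset.sum_const, Nat.card_Ioc, nsmul_eq_mul,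
      (by omega : ((v - 1 - 0 : ℕ) : ℤ) = (v:ℤ) - 1)]
  have eB : ∑ u ∈ Ioc (v-1) v, c2 δ v u = g δ v := by
    have : Ioc (v-1) v = {v} := by ext u; simp only [mem_Ioc, mem_singleton]; omega
    rw [this, Finset.sum_singleton, c2_diag]
  have eC : 2 * ∑ u ∈ Ioc v δ, c2 δ v u = (δ:ℤ)*(δ+1) - (v:ℤ)*(v+1) := by
    have hval : ∀ u ∈ Ioc v δ, (2:ℤ) * c2 δ v u = 2*(u:ℤ) := by
      intro u hu; simp only [mem_Ioc] at hu
      rw [cnt2_cast_R1 h1 (by omega) (by omega)]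
    rw [Finset.mul_sum, Finset.sum_congr rfl hval,
      sum_Ioc_eq (fun u => 2*(u:ℤ)) (fun x => (x:ℤ)*((x:ℤ)+1))
        (fun x => by push_cast; ring) (by omega : v ≤ δ)]
  have eD : ∑ u ∈ Ioc δ (v+δ), c2 δ v u = (v:ℤ) * (2*(δ:ℤ) - 2) := by
    have hval : ∀ u ∈ Ioc δ (v+δ), c2 δ v u = 2*(δ:ℤ) - 2 := by
      intro u hu; simp only [mem_Ioc] at hu
      exact cnt2_cast_R3 h1 h2 (by omega) (by omega) (by omega)
    rw [Finset.sum_congr rfl hval, Finset.sum_const, Nat.card_Ioc, nsmul_eq_mul,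
      (by omega : ((v + δ - δ : ℕ) : ℤ) = (v:ℤ))]
  have eE : 2 * ∑ u ∈ Ioc (v+δ) (2*δ), c2 δ v u = (δ:ℤ)*(δ+1) - (v:ℤ)*(v+1) := by
    have hval : ∀ u ∈ Ioc (v+δ) (2*δ), (2:ℤ) * c2 δ v u = 2*((v:ℤ) + 2*δ + 1 - u) := by
      intro u hu; simp only [mem_Ioc] at hu
      rw [cnt2_cast_R4 h1 h2 (by omega) (by omega)]
    rw [Finset.mul_sum, Finset.sum_congr rfl hval,
      sum_Ioc_eq (fun u => 2*((v:ℤ) + 2*δ + 1 - u))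
        (fun x => -(((v:ℤ) + 2*δ - x) * ((v:ℤ) + 2*δ - x + 1)))
        (fun x => by push_cast; ring) (by omega : v + δ ≤ 2*δ)]
    push_cast; ring
  rw [e0] at hcol
  linarith [hcol, eA, eB, eC, eD, eE]

lemma sum_upper_half (δ : ℕ) (f : ℕ → ℤ)
    (hf : ∀ v, 1 ≤ v → v ≤ 2*δ → f (2*δ+1-v) = f v) :
    ∑ v ∈ Ioc δ (2*δ), f v = ∑ v ∈ Ioc 0 δ, f v := by
  apply Finset.sum_nbij' (fun v => 2*δ+1-v) (fun v => 2*δ+1-v)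
  · intro a ha; simp only [mem_Ioc] at *; omega
  · intro a ha; simp only [mem_Ioc] at *; omega
  · intro a ha; simp only [mem_Ioc] at ha; omega
  · intro a ha; simp only [mem_Ioc] at ha; omega
  · intro a ha; simp only [mem_Ioc] at ha
    have := hf (2*δ+1-a) (by omega) (by omega)
    rw [(by omega : 2*δ+1-(2*δ+1-a) = a)] at this
    exact this

lemma grevsq {δ : ℕ} : ∀ v, 1 ≤ v → v ≤ 2*δ → (g δ (2*δ+1-v))^2 = (g δ v)^2 := by
  intro v h1 h2; rw [grev h1 h2]

def Nc (δ : ℕ) : ℤ := ((Cset δ).card : ℤ)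
def SG (δ : ℕ) : ℤ := ∑ v ∈ Ioc 0 (2*δ), (g δ v)^2
def XX (δ : ℕ) : ℤ := ∑ u ∈ Ioc 0 (2*δ), ∑ v ∈ Ioc u (2*δ), (c2 δ u v)^2

lemma sumg (δ : ℕ) : ∑ v ∈ Ioc 0 (2*δ), g δ v = 3 * Nc δ := by
  unfold g Nc
  rw [Finset.sum_comm]
  rw [Finset.sum_congr rfl (fun t ht => rowsum ht), Finset.sum_const, nsmul_eq_mul]
  ring

lemma hN (δ : ℕ) : 3 * Nc δ = (δ:ℤ)*((δ:ℤ)+1)*(2*(δ:ℤ)-2) := by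
  rw [← sumg δ,
    ← Finset.sum_Ioc_consecutive _ (by omega : (0:ℕ) ≤ δ) (by omega : δ ≤ 2*δ),
    sum_upper_half δ _ (fun v h1 h2 => grev h1 h2)]
  have : ∀ s : ℤ, s + s = 2 * s := fun s => by ring
  rw [this]
  have e1 : 2 * ∑ v ∈ Ioc 0 δ, g δ v = ∑ v ∈ Ioc 0 δ, ((δ:ℤ)*((δ:ℤ)+1) + 2*(v:ℤ)*((δ:ℤ)-2)) := by
    rw [Finset.mul_sum]
    exact Finset.sum_congr rfl (fun v hv => by
      simp only [mem_Ioc] at hv; exact two_g (by omega) (by omega))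
  have e2 : ∑ v ∈ Ioc 0 δ, ((δ:ℤ)*((δ:ℤ)+1) + 2*(v:ℤ)*((δ:ℤ)-2))
      = (δ:ℤ)*((δ:ℤ)+1)*(δ:ℤ) + ((δ:ℤ)-2)*(δ:ℤ)*((δ:ℤ)+1) := by
    rw [sum_Ioc_eq _ (fun x => (δ:ℤ)*((δ:ℤ)+1)*(x:ℤ) + ((δ:ℤ)-2)*(x:ℤ)*((x:ℤ)+1))
      (fun x => by push_cast; ring) (by omega : 0 ≤ δ)]
    push_cast; ring
  linarith [e1, e2]

lemma hSG (δ : ℕ) : 6 * SG δ = 13*(δ:ℤ)^5 - 4*(δ:ℤ)^4 - 21*(δ:ℤ)^3 + 4*(δ:ℤ)^2 + 8*(δ:ℤ) := by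
  unfold SG
  rw [← Finset.sum_Ioc_consecutive _ (by omega : (0:ℕ) ≤ δ) (by omega : δ ≤ 2*δ),
    sum_upper_half δ _ (fun v h1 h2 => grevsq v h1 h2)]
  have collapse : ∀ s : ℤ, 6 * (s + s) = 12 * s := fun s => by ring
  rw [collapse]
  have e1 : 12 * ∑ v ∈ Ioc 0 δ, (g δ v)^2
      = ∑ v ∈ Ioc 0 δ, 3*((δ:ℤ)*((δ:ℤ)+1) + 2*(v:ℤ)*((δ:ℤ)-2))^2 := by
    rw [Finset.mul_sum]
    refine Finset.sum_congr rfl (fun v hv => ?_)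
    simp only [mem_Ioc] at hv
    have h := two_g (δ := δ) (v := v) (by omega) (by omega)
    calc 12 * (g δ v)^2 = 3*(2 * g δ v)^2 := by ring
    _ = 3*((δ:ℤ)*((δ:ℤ)+1) + 2*(v:ℤ)*((δ:ℤ)-2))^2 := by rw [h]
  rw [e1, sum_Ioc_eq _ (fun x => 3*((δ:ℤ)*((δ:ℤ)+1))^2*(x:ℤ)
      + 3*((δ:ℤ)*((δ:ℤ)+1))*(2*((δ:ℤ)-2))*(x:ℤ)*((x:ℤ)+1)
      + 2*((δ:ℤ)-2)^2*(x:ℤ)*((x:ℤ)+1)*(2*(x:ℤ)+1))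
      (fun x => by push_cast; ring) (by omega : 0 ≤ δ)]
  push_cast; ring

lemma inner6 {δ u : ℕ} (h1 : 1 ≤ u) (h2 : u ≤ δ) :
    6 * ∑ v ∈ Ioc u (2*δ), (c2 δ u v)^2
      = 2*(2*(δ:ℤ)^3+3*(δ:ℤ)^2+(δ:ℤ)) - 2*(2*(u:ℤ)^3+3*(u:ℤ)^2+(u:ℤ))
        + 6*(2*(δ:ℤ)-2)^2*(u:ℤ) := by
  rw [← Finset.sum_Ioc_consecutive _ (by omega : u ≤ δ) (by omega : δ ≤ 2*δ),
    ← Finset.sum_Ioc_consecutive _ (by omega : δ ≤ u+δ) (by omega : u+δ ≤ 2*δ)]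
  have p1 : 6 * ∑ v ∈ Ioc u δ, (c2 δ u v)^2
      = (2*(δ:ℤ)^3+3*(δ:ℤ)^2+(δ:ℤ)) - (2*(u:ℤ)^3+3*(u:ℤ)^2+(u:ℤ)) := by
    rw [Finset.mul_sum, Finset.sum_congr rfl (fun v hv => ?_),
      sum_Ioc_eq (fun v => 6*(v:ℤ)^2) (fun x => 2*(x:ℤ)^3+3*(x:ℤ)^2+(x:ℤ))
        (fun x => by push_cast; ring) h2]
    simp only [mem_Ioc] at hv
    rw [cnt2_cast_R1 h1 (by omega) (by omega)]
  have p2 : 6 * ∑ v ∈ Ioc δ (u+δ), (c2 δ u v)^2 = 6*(2*(δ:ℤ)-2)^2*(u:ℤ) := by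
    have hval : ∀ v ∈ Ioc δ (u+δ), (c2 δ u v)^2 = (2*(δ:ℤ)-2)^2 := by
      intro v hv; simp only [mem_Ioc] at hv
      rw [cnt2_cast_R3 h1 h2 (by omega) (by omega) (by omega)]
    rw [Finset.sum_congr rfl hval, Finset.sum_const, Nat.card_Ioc, nsmul_eq_mul,
      (by omega : ((u + δ - δ : ℕ) : ℤ) = (u:ℤ))]
    ring
  have p3 : 6 * ∑ v ∈ Ioc (u+δ) (2*δ), (c2 δ u v)^2
      = (2*(δ:ℤ)^3+3*(δ:ℤ)^2+(δ:ℤ)) - (2*(u:ℤ)^3+3*(u:ℤ)^2+(u:ℤ)) := by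
    rw [Finset.mul_sum, Finset.sum_congr rfl (fun v hv => ?_),
      sum_Ioc_eq (fun v => 6*((u:ℤ)+2*(δ:ℤ)+1-(v:ℤ))^2)
        (fun x => -(2*((u:ℤ)+2*(δ:ℤ)-(x:ℤ))^3+3*((u:ℤ)+2*(δ:ℤ)-(x:ℤ))^2+((u:ℤ)+2*(δ:ℤ)-(x:ℤ))))
        (fun x => by push_cast; ring) (by omega : u+δ ≤ 2*δ)]
    · push_cast; ring
    · simp only [mem_Ioc] at hv
      rw [cnt2_cast_R4 h1 h2 (by omega) (by omega)]
  rw [mul_add, mul_add, p2, p3]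
  -- remaining: 6 * (∑ Ioc u δ) inside
  linarith [p1]

lemma hX (δ : ℕ) : 12 * XX δ = 33*(δ:ℤ)^4 - 18*(δ:ℤ)^3 - 33*(δ:ℤ)^2 + 18*(δ:ℤ) := by
  unfold XX
  rw [← Finset.sum_Ioc_consecutive _ (by omega : (0:ℕ) ≤ δ) (by omega : δ ≤ 2*δ)]
  have eX1 : 12 * ∑ u ∈ Ioc 0 δ, ∑ v ∈ Ioc u (2*δ), (c2 δ u v)^2
      = 2 * (15*(δ:ℤ)^4 - 10*(δ:ℤ)^3 - 15*(δ:ℤ)^2 + 10*(δ:ℤ)) := by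
    have step1 : 12 * ∑ u ∈ Ioc 0 δ, ∑ v ∈ Ioc u (2*δ), (c2 δ u v)^2
        = 2 * ∑ u ∈ Ioc 0 δ, (6 * ∑ v ∈ Ioc u (2*δ), (c2 δ u v)^2) := by
      rw [Finset.mul_sum, Finset.mul_sum]
      exact Finset.sum_congr rfl (fun u hu => by ring)
    have hval : ∀ u ∈ Ioc 0 δ, (6:ℤ) * ∑ v ∈ Ioc u (2*δ), (c2 δ u v)^2
        = 2*(2*(δ:ℤ)^3+3*(δ:ℤ)^2+(δ:ℤ)) - 2*(2*(u:ℤ)^3+3*(u:ℤ)^2+(u:ℤ))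
          + 6*(2*(δ:ℤ)-2)^2*(u:ℤ) := by
      intro u hu; simp only [mem_Ioc] at hu
      exact inner6 (by omega) (by omega)
    rw [step1, Finset.sum_congr rfl hval,
      sum_Ioc_eq _ (fun x => (4*(δ:ℤ)^3+6*(δ:ℤ)^2+2*(δ:ℤ))*(x:ℤ)
        + (12*(δ:ℤ)^2-24*(δ:ℤ)+11)*(x:ℤ)*((x:ℤ)+1)
        - (2*(x:ℤ)^3+3*(x:ℤ)^2+(x:ℤ)) - (x:ℤ)^2*((x:ℤ)+1)^2)
        (fun x => by push_cast; ring) (by omega : 0 ≤ δ)]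
    push_cast; ring
  have eX2 : 12 * ∑ u ∈ Ioc δ (2*δ), ∑ v ∈ Ioc u (2*δ), (c2 δ u v)^2
      = 3*(δ:ℤ)^4 + 2*(δ:ℤ)^3 - 3*(δ:ℤ)^2 - 2*(δ:ℤ) := by
    have hval : ∀ u ∈ Ioc δ (2*δ), (12:ℤ) * ∑ v ∈ Ioc u (2*δ), (c2 δ u v)^2
        = 12*(2*(δ:ℤ)-(u:ℤ))*(2*(δ:ℤ)+1-(u:ℤ))^2 := by
      intro u hu; simp only [mem_Ioc] at hu
      have hv : ∀ v ∈ Ioc u (2*δ), (c2 δ u v)^2 = (2*(δ:ℤ)+1-(u:ℤ))^2 := by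
        intro v hvv; simp only [mem_Ioc] at hvv
        rw [cnt2_cast_R2 (by omega) (by omega) (by omega)]
      rw [Finset.sum_congr rfl hv, Finset.sum_const, Nat.card_Ioc, nsmul_eq_mul,
        (by omega : ((2*δ - u : ℕ) : ℤ) = 2*(δ:ℤ) - (u:ℤ))]
      ring
    rw [Finset.mul_sum, Finset.sum_congr rfl hval,
      sum_Ioc_eq _ (fun x => -(3*(2*(δ:ℤ)-(x:ℤ))^2*((2*(δ:ℤ)-(x:ℤ))+1)^2
        - 2*(2*(2*(δ:ℤ)-(x:ℤ))^3+3*(2*(δ:ℤ)-(x:ℤ))^2+(2*(δ:ℤ)-(x:ℤ)))))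
        (fun x => by push_cast; ring) (by omega : δ ≤ 2*δ)]
    push_cast; ring
  rw [mul_add, eX2]
  linarith [eX1]

def DisjP (p : (ℕ × ℕ × ℕ) × (ℕ × ℕ × ℕ)) : Prop :=
  p.1.1 ≠ p.2.1 ∧ p.1.1 ≠ p.2.2.1 ∧ p.1.1 ≠ p.2.2.2 ∧
  p.1.2.1 ≠ p.2.1 ∧ p.1.2.1 ≠ p.2.2.1 ∧ p.1.2.1 ≠ p.2.2.2 ∧
  p.1.2.2 ≠ p.2.1 ∧ p.1.2.2 ≠ p.2.2.1 ∧ p.1.2.2 ≠ p.2.2.2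

instance : DecidablePred DisjP := fun p => by unfold DisjP; infer_instance

def Tpairs (δ : ℕ) : Finset ((ℕ × ℕ × ℕ) × (ℕ × ℕ × ℕ)) :=
  ((Cset δ) ×ˢ (Cset δ)).filter DisjP

/-- the pointwise inclusion-exclusion identity -/
lemma pointwise {δ : ℕ} {t t' : ℕ × ℕ × ℕ} (ht : t ∈ Cset δ) (ht' : t' ∈ Cset δ) :
    2 * (if DisjP (t, t') then (1:ℤ) else 0)
      = 2 - 3 * (∑ v ∈ Ioc 0 (2*δ), chi v t * chi v t')
        + (∑ v ∈ Ioc 0 (2*δ), chi v t * chi v t')^2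
        - 2 * (if t = t' then (1:ℤ) else 0) := by
  obtain ⟨a, b, c⟩ := t
  obtain ⟨a', b', c'⟩ := t'
  rw [mem_Cset] at ht ht'
  simp only at ht ht'
  set K := (Ioc 0 (2*δ)).filter (fun v =>
    (v = a ∨ v = b ∨ v = c) ∧ (v = a' ∨ v = b' ∨ v = c')) with hK
  have hkK : (∑ v ∈ Ioc 0 (2*δ), chi v (a,b,c) * chi v (a',b',c')) = (K.card : ℤ) := by
    rw [hK, ← Finset.sum_boole]
    refine Finset.sum_congr rfl fun v _ => ?_
    unfold chi
    by_cases h1 : (v = (a,b,c).1 ∨ v = (a,b,c).2.1 ∨ v = (a,b,c).2.2) <;>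
    by_cases h2 : (v = (a',b',c').1 ∨ v = (a',b',c').2.1 ∨ v = (a',b',c').2.2) <;>
      simp only at h1 h2 <;> simp [h1, h2]
  have hsub : K ⊆ {a, b, c} := by
    intro v hv
    simp only [hK, mem_filter, mem_Ioc, mem_insert, mem_singleton] at hv ⊢
    omega
  have hcard3 : ({a, b, c} : Finset ℕ).card = 3 := by
    rw [Finset.card_insert_of_notMem (by simp only [mem_insert, mem_singleton]; omega),
      Finset.card_insert_of_notMem (by simp only [mem_singleton]; omega),
      Finset.card_singleton]
  have hle : K.card ≤ 3 := by
    have := Finset.card_le_card hsub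
    omega
  have hdisj_iff : DisjP ((a,b,c), (a',b',c')) ↔ K.card = 0 := by
    rw [Finset.card_eq_zero, Finset.filter_eq_empty_iff]
    constructor
    · intro hd v hv
      simp only [mem_Ioc] at hv
      unfold DisjP at hd
      simp only at hd
      omega
    · intro hall
      have h1 := fun (hv : a ∈ Ioc 0 (2*δ)) => hall hv
      have hA := hall (by simp only [mem_Ioc]; omega : a ∈ Ioc 0 (2*δ))
      have hB := hall (by simp only [mem_Ioc]; omega : b ∈ Ioc 0 (2*δ))
      have hC := hall (by simp only [mem_Ioc]; omega : c ∈ Ioc 0 (2*δ))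
      unfold DisjP
      simp only
      omega
  have heq_iff : ((a,b,c) : ℕ×ℕ×ℕ) = (a',b',c') ↔ K.card = 3 := by
    constructor
    · intro h
      rw [Prod.mk.injEq, Prod.mk.injEq] at h
      have hKeq : K = {a, b, c} := by
        apply Finset.Subset.antisymm hsub
        intro v hv
        simp only [mem_insert, mem_singleton] at hv
        simp only [hK, mem_filter, mem_Ioc]
        omega
      rw [hKeq, hcard3]
    · intro h
      have hKeq : K = {a, b, c} := Finset.eq_of_subset_of_card_le hsub (by omega)
      have hA : a ∈ K := by rw [hKeq]; simp
      have hB : b ∈ K := by rw [hKeq]; simp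
      have hC : c ∈ K := by rw [hKeq]; simp
      simp only [hK, mem_filter, mem_Ioc] at hA hB hC
      rw [Prod.mk.injEq, Prod.mk.injEq]
      omega
  rw [hkK]
  by_cases hd : DisjP ((a,b,c), (a',b',c')) <;>
  by_cases he : ((a,b,c) : ℕ×ℕ×ℕ) = (a',b',c')
  · exfalso
    rw [hdisj_iff] at hd
    rw [heq_iff] at he
    omega
  · rw [if_pos hd, if_neg he]
    rw [hdisj_iff] at hd
    rw [hd]
    norm_num
  · rw [if_neg hd, if_pos he]
    rw [heq_iff] at he
    rw [he]
    norm_num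
  · rw [if_neg hd, if_neg he]
    rw [hdisj_iff] at hd
    rw [heq_iff] at he
    have h1 : 1 ≤ K.card := by omega
    have h2 : K.card ≤ 2 := by omega
    interval_cases h : K.card <;> norm_num

lemma sum_Ioc_zero_split (f : ℕ → ℤ) (u : ℕ) (h : 1 ≤ u) :
    ∑ v ∈ Ioc 0 u, f v = (∑ v ∈ Ioc 0 (u-1), f v) + f u := by
  obtain ⟨w, rfl⟩ : ∃ w, u = w + 1 := ⟨u-1, by omega⟩
  rw [Finset.sum_Ioc_succ_top (by omega)]
  simp

/-- the symmetric double sum in terms of SG and XX -/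
lemma hSH (δ : ℕ) :
    ∑ u ∈ Ioc 0 (2*δ), ∑ v ∈ Ioc 0 (2*δ), (c2 δ u v)^2 = SG δ + 2 * XX δ := by
  have split1 : ∀ u ∈ Ioc 0 (2*δ),
      ∑ v ∈ Ioc 0 (2*δ), (c2 δ u v)^2
        = ((∑ v ∈ Ioc 0 (u-1), (c2 δ u v)^2) + (g δ u)^2)
          + ∑ v ∈ Ioc u (2*δ), (c2 δ u v)^2 := by
    intro u hu
    simp only [mem_Ioc] at hu
    rw [← Finset.sum_Ioc_consecutive _ (by omega : (0:ℕ) ≤ u) (by omega : u ≤ 2*δ),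
      sum_Ioc_zero_split _ u (by omega), c2_diag]
  rw [Finset.sum_congr rfl split1]
  rw [Finset.sum_add_distrib, Finset.sum_add_distrib]
  have hW : ∑ u ∈ Ioc 0 (2*δ), ∑ v ∈ Ioc 0 (u-1), (c2 δ u v)^2 = XX δ := by
    have lhsW : ∑ u ∈ Ioc 0 (2*δ), ∑ v ∈ Ioc 0 (u-1), (c2 δ u v)^2
        = ∑ p ∈ ((Ioc 0 (2*δ)) ×ˢ (Ioc 0 (2*δ))).filter (fun p => p.2 < p.1),
            (c2 δ p.1 p.2)^2 := by
      rw [Finset.sum_filter, Finset.sum_product]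
      refine Finset.sum_congr rfl fun u hu => ?_
      simp only [mem_Ioc] at hu
      rw [← Finset.sum_filter, Ioc_filter_gt _ _ (by omega) (by omega)]
    have rhsW : XX δ
        = ∑ p ∈ ((Ioc 0 (2*δ)) ×ˢ (Ioc 0 (2*δ))).filter (fun p => p.1 < p.2),
            (c2 δ p.1 p.2)^2 := by
      unfold XX
      rw [Finset.sum_filter, Finset.sum_product]
      refine Finset.sum_congr rfl fun u hu => ?_
      simp only [mem_Ioc] at hu
      rw [← Finset.sum_filter, Ioc_filter_lt _ _ (by omega)]
    rw [lhsW, rhsW]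
    apply Finset.sum_nbij' (fun p => Prod.swap p) (fun p => Prod.swap p)
    · intro p hp
      simp only [mem_filter, mem_product, mem_Ioc, Prod.fst_swap, Prod.snd_swap] at hp ⊢
      tauto
    · intro p hp
      simp only [mem_filter, mem_product, mem_Ioc, Prod.fst_swap, Prod.snd_swap] at hp ⊢
      tauto
    · intro p _; simp
    · intro p _; simp
    · intro p _
      simp only [Prod.fst_swap, Prod.snd_swap]
      rw [c2_symm]
  rw [hW]
  unfold SG XX
  ring

lemma key (δ : ℕ) : 2 * ((Tpairs δ).card : ℤ)
    = 2*(Nc δ)^2 - 2*(Nc δ) - 3*(SG δ) + (SG δ + 2 * XX δ) := by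
  have hcardT : ((Tpairs δ).card : ℤ)
      = ∑ p ∈ (Cset δ) ×ˢ (Cset δ), (if DisjP p then (1:ℤ) else 0) := by
    rw [Finset.sum_boole]; rfl
  have hpt : ∀ p ∈ (Cset δ) ×ˢ (Cset δ),
      2 * (if DisjP p then (1:ℤ) else 0)
        = 2 - 3 * (∑ v ∈ Ioc 0 (2*δ), chi v p.1 * chi v p.2)
          + (∑ v ∈ Ioc 0 (2*δ), chi v p.1 * chi v p.2)^2
          - 2 * (if p.1 = p.2 then (1:ℤ) else 0) := by
    intro p hp
    rw [Finset.mem_product] at hp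
    have := pointwise (δ := δ) hp.1 hp.2
    simpa using this
  rw [hcardT, Finset.mul_sum, Finset.sum_congr rfl hpt]
  have hsplit : ∑ p ∈ (Cset δ) ×ˢ (Cset δ),
      (2 - 3 * (∑ v ∈ Ioc 0 (2*δ), chi v p.1 * chi v p.2)
        + (∑ v ∈ Ioc 0 (2*δ), chi v p.1 * chi v p.2)^2
        - 2 * (if p.1 = p.2 then (1:ℤ) else 0))
      = (∑ _p ∈ (Cset δ) ×ˢ (Cset δ), (2:ℤ))
        - 3 * (∑ p ∈ (Cset δ) ×ˢ (Cset δ), ∑ v ∈ Ioc 0 (2*δ), chi v p.1 * chi v p.2)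
        + (∑ p ∈ (Cset δ) ×ˢ (Cset δ), (∑ v ∈ Ioc 0 (2*δ), chi v p.1 * chi v p.2)^2)
        - 2 * (∑ p ∈ (Cset δ) ×ˢ (Cset δ), (if p.1 = p.2 then (1:ℤ) else 0)) := by
    rw [Finset.mul_sum, Finset.mul_sum, ← Finset.sum_sub_distrib, ← Finset.sum_add_distrib,
      ← Finset.sum_sub_distrib]
  rw [hsplit]
  have e1 : (∑ _p ∈ (Cset δ) ×ˢ (Cset δ), (2:ℤ)) = 2 * (Nc δ)^2 := by
    rw [Finset.sum_const, Finset.card_product, nsmul_eq_mul]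
    unfold Nc; push_cast; ring
  have e2 : (∑ p ∈ (Cset δ) ×ˢ (Cset δ), (if p.1 = p.2 then (1:ℤ) else 0)) = Nc δ := by
    rw [Finset.sum_product]
    have inner : ∀ t ∈ Cset δ, (∑ t' ∈ Cset δ, if (t, t').1 = (t, t').2 then (1:ℤ) else 0)
        = 1 := by
      intro t ht
      simp only
      rw [Finset.sum_ite_eq (Cset δ) t (fun _ => (1:ℤ))]
      simp [ht]
    rw [Finset.sum_congr rfl inner, Finset.sum_const, nsmul_eq_mul]
    unfold Nc; push_cast; ring
  have e3 : (∑ p ∈ (Cset δ) ×ˢ (Cset δ), ∑ v ∈ Ioc 0 (2*δ), chi v p.1 * chi v p.2)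
      = SG δ := by
    rw [Finset.sum_comm]
    unfold SG
    refine Finset.sum_congr rfl fun v _ => ?_
    rw [Finset.sum_product]
    simp only
    rw [← Finset.sum_mul_sum]
    unfold g
    ring
  have e4 : (∑ p ∈ (Cset δ) ×ˢ (Cset δ), (∑ v ∈ Ioc 0 (2*δ), chi v p.1 * chi v p.2)^2)
      = SG δ + 2 * XX δ := by
    rw [← hSH δ]
    have pt2 : ∀ p ∈ (Cset δ) ×ˢ (Cset δ),
        (∑ v ∈ Ioc 0 (2*δ), chi v p.1 * chi v p.2)^2
          = ∑ u ∈ Ioc 0 (2*δ), ∑ v ∈ Ioc 0 (2*δ),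
              (chi u p.1 * chi v p.1) * (chi u p.2 * chi v p.2) := by
      intro p _
      rw [sq, Finset.sum_mul_sum]
      exact Finset.sum_congr rfl fun u _ => Finset.sum_congr rfl fun v _ => by ring
    rw [Finset.sum_congr rfl pt2, Finset.sum_comm]
    refine Finset.sum_congr rfl fun u _ => ?_
    rw [Finset.sum_comm]
    refine Finset.sum_congr rfl fun v _ => ?_
    rw [Finset.sum_product]
    simp only
    rw [← Finset.sum_mul_sum]
    unfold c2
    rw [sq]
  rw [e1, e2, e3, e4]
  ring

theorem card_Tpairs (δ : ℕ) : 36 * ((Tpairs δ).card : ℤ)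
    = ((δ:ℤ)-2)*((δ:ℤ)-1)*(δ:ℤ)*((δ:ℤ)+1)*(2*(δ:ℤ)-5)*(8*(δ:ℤ)-3) := by
  have h1 := hN δ
  have h2 := hSG δ
  have h3 := hX δ
  have hk := key δ
  linear_combination 18*hk + (4*(3*Nc δ + ((δ:ℤ)*((δ:ℤ)+1)*(2*(δ:ℤ)-2))) - 12)*h1
    - 6*h2 + 3*h3

end RLTaux

namespace RLTaux

/-- arithmetic facts about a based 4-cycle -/
lemma cycle_facts {n δ : ℕ} (hn : n = 2*δ+1) {v : Fin 4 → ZMod n}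
    (hv : IsBasedCycleAtZero n 4 v) :
    1 ≤ (v 1).val ∧ (v 1).val < (v 2).val ∧ (v 2).val < (v 3).val ∧ (v 3).val ≤ 2*δ ∧
      (v 1).val ≤ δ ∧ (v 2).val ≤ (v 1).val + δ ∧ (v 3).val ≤ (v 2).val + δ ∧
      δ + 1 ≤ (v 3).val := by
  haveI : NeZero n := ⟨by omega⟩
  obtain ⟨h0, hinj, harc⟩ := hv
  have hhalf : (n - 1) / 2 = δ := by omega
  set a := (v 1).val with ha
  set b := (v 2).val with hb
  set c := (v 3).val with hc
  have hva : v 1 ≠ 0 := by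
    intro h; exact (by decide : (1 : Fin 4) ≠ 0) (hinj (h.trans h0.symm))
  have hvb : v 2 ≠ 0 := by
    intro h; exact (by decide : (2 : Fin 4) ≠ 0) (hinj (h.trans h0.symm))
  have hvc : v 3 ≠ 0 := by
    intro h; exact (by decide : (3 : Fin 4) ≠ 0) (hinj (h.trans h0.symm))
  have han : a < n := ZMod.val_lt _
  have hbn : b < n := ZMod.val_lt _
  have hcn : c < n := ZMod.val_lt _
  -- first arc
  have h01 := harc 0
  rw [rltAdj, show ((0:Fin 4) + 1) = 1 from rfl, h0, sub_zero, Finset.mem_Icc, hhalf] at h01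
  -- second arc
  have h12 := harc 1
  rw [rltAdj, show ((1:Fin 4) + 1) = 2 from rfl, Finset.mem_Icc, hhalf] at h12
  set d := (v 2 - v 1).val with hd
  have hdn : d < n := ZMod.val_lt _
  have hv2 : v 2 = v 1 + (d : ZMod n) := by
    rw [hd, ZMod.natCast_rightInverse (v 2 - v 1)]; ring
  have hbval : b = (a + d) % n := by
    rw [hb, hv2, ZMod.val_add, ZMod.val_natCast, Nat.mod_eq_of_lt hdn]
  have hab : b = a + d := by
    rw [hbval, Nat.mod_eq_of_lt (by omega)]
  -- third arc
  have h23 := harc 2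
  rw [rltAdj, show ((2:Fin 4) + 1) = 3 from rfl, Finset.mem_Icc, hhalf] at h23
  set e := (v 3 - v 2).val with he
  have hen : e < n := ZMod.val_lt _
  have hv3 : v 3 = v 2 + (e : ZMod n) := by
    rw [he, ZMod.natCast_rightInverse (v 3 - v 2)]; ring
  have hcval : c = (b + e) % n := by
    rw [hc, hv3, ZMod.val_add, ZMod.val_natCast, Nat.mod_eq_of_lt hen]
  -- last arc
  have h30 := harc 3
  rw [rltAdj, show ((3:Fin 4) + 1) = 0 from rfl, h0, zero_sub, Finset.mem_Icc, hhalf,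
    ZMod.neg_val, if_neg hvc] at h30
  have hc1 : 1 ≤ c := by
    rcases Nat.eq_zero_or_pos c with h | h
    · exact absurd ((ZMod.val_eq_zero _).mp h) hvc
    · omega
  -- resolve the mod in hcval
  rcases Nat.lt_or_ge (b + e) n with hlt | hge
  · rw [Nat.mod_eq_of_lt hlt] at hcval
    omega
  · exfalso
    rw [Nat.mod_eq_sub_mod hge, Nat.mod_eq_of_lt (by omega)] at hcval
    omega

end RLTaux

namespace RLTaux2
open RLTaux

/-- the cycle attached to a triple -/
def mk (n a b c : ℕ) : Fin 4 → ZMod n := ![0, (a : ZMod n), (b : ZMod n), (c : ZMod n)]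

lemma mk_val {n a b c : ℕ} (hn : 0 < n) (ha : a < n) (hb : b < n) (hc : c < n) :
    ∀ z : Fin 4, (mk n a b c z).val = (![0, a, b, c] : Fin 4 → ℕ) z := by
  haveI : NeZero n := ⟨by omega⟩
  intro z
  fin_cases z
  · simp [mk]
  · simp [mk, ZMod.val_natCast, Nat.mod_eq_of_lt ha]
  · simp [mk, ZMod.val_natCast, Nat.mod_eq_of_lt hb]
  · simp [mk, ZMod.val_natCast, Nat.mod_eq_of_lt hc]

lemma mk_cycle {n δ a b c : ℕ} (hn : n = 2*δ+1)
    (h : 1 ≤ a ∧ a < b ∧ b < c ∧ c ≤ 2*δ ∧ a ≤ δ ∧ b ≤ a + δ ∧ c ≤ b + δ ∧ δ + 1 ≤ c) :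
    IsBasedCycleAtZero n 4 (mk n a b c) := by
  haveI : NeZero n := ⟨by omega⟩
  have hhalf : (n - 1) / 2 = δ := by omega
  have hkey := mk_val (n := n) (a := a) (b := b) (c := c) (by omega) (by omega) (by omega)
    (by omega)
  refine ⟨rfl, ?_, ?_⟩
  · intro x y hxy
    have hval : (mk n a b c x).val = (mk n a b c y).val := congrArg ZMod.val hxy
    rw [hkey x, hkey y] at hval
    fin_cases x <;> fin_cases y <;>
      first
        | rfl
        | (exfalso; simp at hval; omega)
  · have hca : ((a : ZMod n)).val = a := ZMod.val_cast_of_lt (by omega)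
    have hcb : ((b : ZMod n)).val = b := ZMod.val_cast_of_lt (by omega)
    have hcc : ((c : ZMod n)).val = c := ZMod.val_cast_of_lt (by omega)
    intro k
    fin_cases k
    · show rltAdj n ((0 : ZMod n)) ((a : ZMod n))
      rw [rltAdj, sub_zero, hca, Finset.mem_Icc, hhalf]
      omega
    · show rltAdj n ((a : ZMod n)) ((b : ZMod n))
      rw [rltAdj, ← Nat.cast_sub (by omega : a ≤ b),
        ZMod.val_cast_of_lt (by omega : b - a < n), Finset.mem_Icc, hhalf]
      omega
    · show rltAdj n ((b : ZMod n)) ((c : ZMod n))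
      rw [rltAdj, ← Nat.cast_sub (by omega : b ≤ c),
        ZMod.val_cast_of_lt (by omega : c - b < n), Finset.mem_Icc, hhalf]
      omega
    · show rltAdj n ((c : ZMod n)) ((0 : ZMod n))
      have hne : (c : ZMod n) ≠ 0 := by
        intro hz
        rw [hz, ZMod.val_zero] at hcc
        omega
      rw [rltAdj, zero_sub, ZMod.neg_val, if_neg hne, hcc, Finset.mem_Icc, hhalf]
      omega

theorem bridge (n δ : ℕ) (hn : n = 2*δ+1) :
    Nat.card {p : (Fin 4 → ZMod n) × (Fin 4 → ZMod n) //
        IsBasedCycleAtZero n 4 p.1 ∧ IsBasedCycleAtZero n 4 p.2 ∧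
        Set.range p.1 ∩ Set.range p.2 = {0}} = (Tpairs δ).card := by
  haveI : NeZero n := ⟨by omega⟩
  classical
  rw [Nat.card_eq_fintype_card, Fintype.card_subtype]
  apply Finset.card_nbij'
    (i := fun p => (((p.1 1).val, (p.1 2).val, (p.1 3).val),
                    ((p.2 1).val, (p.2 2).val, (p.2 3).val)))
    (j := fun q => (mk n q.1.1 q.1.2.1 q.1.2.2, mk n q.2.1 q.2.2.1 q.2.2.2))
  · -- forward map lands in Tpairs
    intro p hp
    rw [Finset.mem_coe, Finset.mem_filter] at hp
    obtain ⟨-, hc1, hc2, hr⟩ := hp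
    have f1 := cycle_facts hn hc1
    have f2 := cycle_facts hn hc2
    have hno : ∀ i j : Fin 4, p.1 i = p.2 j → p.1 i = 0 := by
      intro i j hEq
      have : p.1 i ∈ Set.range p.1 ∩ Set.range p.2 := ⟨⟨i, rfl⟩, ⟨j, hEq.symm⟩⟩
      rw [hr] at this
      exact this
    have hne : ∀ i j : Fin 4, 1 ≤ (p.1 i).val → (p.1 i).val ≠ (p.2 j).val := by
      intro i j hpos hEq
      have h0 := hno i j (ZMod.val_injective n hEq)
      rw [h0, ZMod.val_zero] at hpos
      omega
    rw [Finset.mem_coe, Tpairs, Finset.mem_filter, Finset.mem_product]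
    refine ⟨⟨?_, ?_⟩, ?_⟩
    · rw [mem_Cset]; exact f1
    · rw [mem_Cset]; exact f2
    · exact ⟨hne 1 1 (by omega), hne 1 2 (by omega), hne 1 3 (by omega),
        hne 2 1 (by omega), hne 2 2 (by omega), hne 2 3 (by omega),
        hne 3 1 (by omega), hne 3 2 (by omega), hne 3 3 (by omega)⟩
  · -- reverse map lands in the subtype set
    intro q hq
    rw [Finset.mem_coe, Tpairs, Finset.mem_filter, Finset.mem_product, mem_Cset, mem_Cset] at hq
    obtain ⟨⟨hq1, hq2⟩, hdis⟩ := hq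
    obtain ⟨⟨a1, b1, c1⟩, ⟨a2, b2, c2⟩⟩ := q
    simp only at hq1 hq2
    unfold DisjP at hdis
    simp only at hdis
    rw [Finset.mem_coe, Finset.mem_filter]
    have hv1 := mk_val (n := n) (a := a1) (b := b1) (c := c1) (by omega) (by omega)
      (by omega) (by omega)
    have hv2 := mk_val (n := n) (a := a2) (b := b2) (c := c2) (by omega) (by omega)
      (by omega) (by omega)
    refine ⟨Finset.mem_univ _, mk_cycle hn hq1, mk_cycle hn hq2, ?_⟩
    ext x
    simp only [Set.mem_inter_iff, Set.mem_range, Set.mem_singleton_iff]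
    constructor
    · rintro ⟨⟨i1, hi1⟩, ⟨i2, hi2⟩⟩
      have hvv : (mk n a1 b1 c1 i1).val = (mk n a2 b2 c2 i2).val := by
        rw [hi1, hi2]
      rw [hv1 i1, hv2 i2] at hvv
      have hx1 : x.val = (![0, a1, b1, c1] : Fin 4 → ℕ) i1 := by
        rw [← hi1, hv1 i1]
      fin_cases i1 <;> fin_cases i2 <;>
        simp at hvv hx1 ⊢ <;>
        first
          | (apply ZMod.val_injective (n := n); rw [hx1, ZMod.val_zero]; done)
          | omega
    · rintro rfl
      exact ⟨⟨0, rfl⟩, ⟨0, rfl⟩⟩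
  · -- left inverse
    intro p hp
    rw [Finset.mem_coe, Finset.mem_filter] at hp
    obtain ⟨-, hc1, hc2, -⟩ := hp
    have r : ∀ (v : Fin 4 → ZMod n), IsBasedCycleAtZero n 4 v →
        mk n (v 1).val (v 2).val (v 3).val = v := by
      intro v hv
      funext z
      fin_cases z
      · exact hv.1.symm
      · exact ZMod.natCast_rightInverse (v 1)
      · exact ZMod.natCast_rightInverse (v 2)
      · exact ZMod.natCast_rightInverse (v 3)
    exact Prod.ext (r p.1 hc1) (r p.2 hc2)
  · -- right inverse
    intro q hq
    rw [Finset.mem_coe, Tpairs, Finset.mem_filter, Finset.mem_product, mem_Cset, mem_Cset] at hq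
    obtain ⟨⟨hq1, hq2⟩, -⟩ := hq
    obtain ⟨⟨a1, b1, c1⟩, ⟨a2, b2, c2⟩⟩ := q
    simp only at hq1 hq2
    have e1 : ((a1 : ZMod n)).val = a1 := ZMod.val_cast_of_lt (by omega)
    have e2 : ((b1 : ZMod n)).val = b1 := ZMod.val_cast_of_lt (by omega)
    have e3 : ((c1 : ZMod n)).val = c1 := ZMod.val_cast_of_lt (by omega)
    have e4 : ((a2 : ZMod n)).val = a2 := ZMod.val_cast_of_lt (by omega)
    have e5 : ((b2 : ZMod n)).val = b2 := ZMod.val_cast_of_lt (by omega)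
    have e6 : ((c2 : ZMod n)).val = c2 := ZMod.val_cast_of_lt (by omega)
    simp only [Prod.mk.injEq]
    exact ⟨⟨e1, e2, e3⟩, e4, e5, e6⟩

end RLTaux2

theorem pairs_of_disjoint_four_cycles_of_RLT
    (n : ℕ) (hodd : Odd n) (hn : 1 ≤ n) (δ : ℕ) (hδ : δ = (n - 1) / 2) :
    36 * (Nat.card {p : (Fin 4 → ZMod n) × (Fin 4 → ZMod n) //
        IsBasedCycleAtZero n 4 p.1 ∧ IsBasedCycleAtZero n 4 p.2 ∧
        Set.range p.1 ∩ Set.range p.2 = {0}} : ℤ)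
      = ((δ : ℤ) - 2) * ((δ : ℤ) - 1) * (δ : ℤ) * ((δ : ℤ) + 1) *
          (2 * (δ : ℤ) - 5) * (8 * (δ : ℤ) - 3) := by
  obtain ⟨m, hm⟩ := hodd
  have hnδ : n = 2*δ + 1 := by omega
  rw [RLTaux2.bridge n δ hnδ]
  exact RLTaux.card_Tpairs δ
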